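/- Let d_z, d_x be positive natural numbers, and let f, f̂ : (Fin d_z → ℝ) → (Fin d_x → ℝ) be continuously differentiable, injective maps whose derivative (fderiv) is injective at every point, and suppose both f and f̂ have single-parent structure. Let v : (Fin d_z → ℝ) → (Fin d_z → ℝ) be continuously differentiable with a continuously differentiable inverse, and suppose f ∘ v = f̂. Then for every z : Fin d_z → ℝ the Jacobian matrix Dv(z) (the matrix of partial derivatives of the coordinates of v at z) is a permutation-scaling matrix: there exists a permutation π_z of Fin d_z such that (Dv(z))_{i,j} ≠ 0 if and only if j = π_z(i). -/

import Mathlib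

/-- `g` depends only on the `k`-th coordinate of its input. -/
def DependsOnlyOn {n : ℕ} (g : (Fin n → ℝ) → ℝ) (k : Fin n) : Prop :=
  ∀ z z' : Fin n → ℝ, z k = z' k → g z = g z'

/-- `f` has single-parent structure: each output coordinate depends on a single
input coordinate. -/
def SingleParent {m n : ℕ} (f : (Fin m → ℝ) → (Fin n → ℝ)) : Prop :=
  ∀ j : Fin n, ∃ k : Fin m, DependsOnlyOn (fun z => f z j) k

lemma hasFDerivAt_coord {m n : ℕ} {f : (Fin m → ℝ) → (Fin n → ℝ)} (hf : Differentiable ℝ f)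
    (j : Fin n) (z : Fin m → ℝ) :
    HasFDerivAt (fun x => f x j)
      ((ContinuousLinearMap.proj (R := ℝ) (φ := fun _ : Fin n => ℝ) j).comp (fderiv ℝ f z)) z :=
  ((ContinuousLinearMap.proj (R := ℝ) (φ := fun _ : Fin n => ℝ) j).hasFDerivAt).comp z
    (hf z).hasFDerivAt

lemma fderiv_coord {m n : ℕ} {f : (Fin m → ℝ) → (Fin n → ℝ)} (hf : Differentiable ℝ f)
    (j : Fin n) (z u : Fin m → ℝ) :
    fderiv ℝ (fun x => f x j) z u = fderiv ℝ f z u j := by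
  rw [(hasFDerivAt_coord hf j z).fderiv]; rfl

lemma diff_coord {m n : ℕ} {f : (Fin m → ℝ) → (Fin n → ℝ)} (hf : Differentiable ℝ f)
    (j : Fin n) : Differentiable ℝ (fun x => f x j) := fun z =>
  (hasFDerivAt_coord hf j z).differentiableAt

lemma dependsOnlyOn_fderiv {n : ℕ} {g : (Fin n → ℝ) → ℝ} {k : Fin n}
    (hg : DependsOnlyOn g k) (hd : Differentiable ℝ g) (z u : Fin n → ℝ) :
    fderiv ℝ g z u = fderiv ℝ g z (Pi.single k 1) * u k := by
  have hsingle : ∀ t : ℝ, (Pi.single k t : Fin n → ℝ) = t • (Pi.single k 1 : Fin n → ℝ) := by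
    intro t; funext i
    by_cases h : i = k
    · subst h; simp
    · simp [Pi.single_eq_of_ne h]
  have hGd : Differentiable ℝ (fun t : ℝ => g (Pi.single k t)) := by
    have h2 : (fun t : ℝ => g (Pi.single k t))
        = g ∘ fun t : ℝ => t • (Pi.single k 1 : Fin n → ℝ) := by
      funext t; simp only [Function.comp_apply]; rw [hsingle t]
    rw [h2]; exact hd.comp (differentiable_id.smul_const _)
  have hgG : ∀ x : Fin n → ℝ, g x = (fun t : ℝ => g (Pi.single k t)) (x k) := by
    intro x
    exact hg x (Pi.single k (x k)) (by simp)
  have key : ∀ x u : Fin n → ℝ,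
      fderiv ℝ g x u = fderiv ℝ (fun t : ℝ => g (Pi.single k t)) (x k) (u k) := by
    intro x u
    have h : HasFDerivAt g
        ((fderiv ℝ (fun t : ℝ => g (Pi.single k t)) (x k)).comp
          (ContinuousLinearMap.proj (R := ℝ) (φ := fun _ : Fin n => ℝ) k)) x := by
      have := (hGd (x k)).hasFDerivAt.comp x
        (ContinuousLinearMap.proj (R := ℝ) (φ := fun _ : Fin n => ℝ) k).hasFDerivAt
      exact this.congr_of_eventuallyEq (Filter.Eventually.of_forall fun y => hgG y)
    rw [h.fderiv]
    rfl
  rw [key z u, key z (Pi.single k 1)]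
  rw [Pi.single_eq_same, show u k = u k • (1:ℝ) by simp, map_smul]
  simp [mul_comm]

theorem stmt1 (d_z d_x : ℕ) (hdz : 0 < d_z) (hdx : 0 < d_x)
    (f fhat : (Fin d_z → ℝ) → (Fin d_x → ℝ))
    (hf : ContDiff ℝ 1 f) (hfinj : Function.Injective f)
    (hfderiv : ∀ z, Function.Injective (fderiv ℝ f z))
    (hfhat : ContDiff ℝ 1 fhat) (hfhatinj : Function.Injective fhat)
    (hfhatderiv : ∀ z, Function.Injective (fderiv ℝ fhat z))
    (hsp : SingleParent f) (hsphat : SingleParent fhat)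
    (v w : (Fin d_z → ℝ) → (Fin d_z → ℝ))
    (hv : ContDiff ℝ 1 v) (hw : ContDiff ℝ 1 w)
    (hwv : Function.LeftInverse w v) (hvw : Function.RightInverse w v)
    (hcomp : f ∘ v = fhat) :
    ∀ z : Fin d_z → ℝ, ∃ π : Equiv.Perm (Fin d_z),
      ∀ i j : Fin d_z, fderiv ℝ v z (Pi.single j 1) i ≠ 0 ↔ j = π i := by
  intro z
  classical
  have hvd : Differentiable ℝ v := hv.differentiable one_ne_zero
  have hwd : Differentiable ℝ w := hw.differentiable one_ne_zero
  have hfd : Differentiable ℝ f := hf.differentiable one_ne_zero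
  have hfhatd : Differentiable ℝ fhat := hfhat.differentiable one_ne_zero
  set Dv := fderiv ℝ v z with hDv
  -- Dv injective
  have hDvinj : Function.Injective Dv := by
    have hid : w ∘ v = id := funext hwv
    have hchain : fderiv ℝ (w ∘ v) z = (fderiv ℝ w (v z)).comp Dv :=
      fderiv_comp z (hwd (v z)) (hvd z)
    rw [hid, fderiv_id] at hchain
    intro a b hab
    have : (fderiv ℝ w (v z)) (Dv a) = (fderiv ℝ w (v z)) (Dv b) := by rw [hab]
    have h1 : ContinuousLinearMap.id ℝ _ a = ContinuousLinearMap.id ℝ _ b := by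
      rw [hchain]; exact this
    simpa using h1
  -- Dv surjective
  have hDvsurj : Function.Surjective Dv := by
    have hid : v ∘ w = id := funext hvw
    have hchain : fderiv ℝ (v ∘ w) (v z) = (fderiv ℝ v (w (v z))).comp (fderiv ℝ w (v z)) :=
      fderiv_comp (v z) (hvd (w (v z))) (hwd (v z))
    rw [hid, fderiv_id, hwv z] at hchain
    intro y
    refine ⟨fderiv ℝ w (v z) y, ?_⟩
    have := congrArg (fun L => (L : (Fin d_z → ℝ) →L[ℝ] (Fin d_z → ℝ)) y) hchain
    simpa using this.symm
  -- parents
  choose p hp using hsp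
  choose ph hph using hsphat
  -- single nonzero derivative constants for f at v z
  have hpar : ∀ i : Fin d_z, ∃ j : Fin d_x, p j = i ∧
      fderiv ℝ (fun x => f x j) (v z) (Pi.single i 1) ≠ 0 := by
    intro i
    have hne : (Pi.single i 1 : Fin d_z → ℝ) ≠ 0 := by
      intro h
      have := congrFun h i
      simp at this
    have h0 : fderiv ℝ f (v z) (Pi.single i 1) ≠ 0 := by
      intro h
      exact hne (hfderiv (v z) (by simpa using h))
    obtain ⟨j, hj⟩ := Function.ne_iff.mp h0
    refine ⟨j, ?_, ?_⟩
    · by_contra hpij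
      apply hj
      have := dependsOnlyOn_fderiv (hp j) (diff_coord hfd j) (v z) (Pi.single i 1)
      rw [fderiv_coord hfd j] at this
      rw [this, Pi.single_eq_of_ne hpij]
      simp
    · rw [← fderiv_coord hfd j] at hj
      exact hj
  choose J hJp hJne using hpar
  -- σ
  set σ : Fin d_z → Fin d_z := fun i => ph (J i) with hσ
  -- row support: Dv (e_l) i = 0 for l ≠ σ i
  have hsupp : ∀ i l : Fin d_z, l ≠ σ i → Dv (Pi.single l 1) i = 0 := by
    intro i l hl
    have hcoordcomp : (fun x => fhat x (J i)) = (fun y => f y (J i)) ∘ v := by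
      funext x
      rw [← hcomp]
      rfl
    have hchain : fderiv ℝ (fun x => fhat x (J i)) z (Pi.single l 1)
        = fderiv ℝ (fun y => f y (J i)) (v z) (Dv (Pi.single l 1)) := by
      rw [hcoordcomp, fderiv_comp z (diff_coord hfd (J i) (v z)) (hvd z)]
      rfl
    have hz : fderiv ℝ (fun x => fhat x (J i)) z (Pi.single l 1) = 0 := by
      rw [dependsOnlyOn_fderiv (hph (J i)) (diff_coord hfhatd (J i)) z]
      rw [Pi.single_eq_of_ne (by simpa [hσ] using Ne.symm hl)]
      simp
    have hform := dependsOnlyOn_fderiv (hp (J i)) (diff_coord hfd (J i)) (v z)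
      (Dv (Pi.single l 1))
    rw [hchain, hform, hJp i] at hz
    exact (mul_eq_zero.mp hz).resolve_left (hJne i)
  -- σ surjective
  have hσsurj : Function.Surjective σ := by
    intro c
    by_contra hc
    push_neg at hc
    have h0 : Dv (Pi.single c 1) = 0 := by
      funext i
      exact hsupp i c (fun h => hc i h.symm)
    have hne : (Pi.single c 1 : Fin d_z → ℝ) ≠ 0 := by
      intro h
      have := congrFun h c
      simp at this
    exact hne (hDvinj (by simpa using h0))
  have hσinj : Function.Injective σ := Finite.injective_iff_surjective.mpr hσsurj
  -- diagonal nonzero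
  have hdiag : ∀ i : Fin d_z, Dv (Pi.single (σ i) 1) i ≠ 0 := by
    intro i hzero
    obtain ⟨u, hu⟩ := hDvsurj (Pi.single i 1)
    have hexp : u = ∑ l : Fin d_z, u l • (Pi.single l 1 : Fin d_z → ℝ) := by
      funext m
      rw [Finset.sum_apply]
      simp [Pi.single_apply]
    have hDvu : Dv u = ∑ l : Fin d_z, u l • Dv (Pi.single l 1) := by
      conv_lhs => rw [hexp]
      rw [map_sum]
      simp only [map_smul]
    have : Dv u i = ∑ l : Fin d_z, u l * Dv (Pi.single l 1) i := by
      rw [hDvu, Finset.sum_apply]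
      rfl
    have hzero2 : Dv u i = 0 := by
      rw [this]
      apply Finset.sum_eq_zero
      intro l _
      by_cases h : l = σ i
      · subst h; rw [hzero]; ring
      · rw [hsupp i l h]; ring
    rw [hu] at hzero2
    simp at hzero2
  refine ⟨Equiv.ofBijective σ ⟨hσinj, hσsurj⟩, ?_⟩
  intro i j
  constructor
  · intro hne
    by_contra hj
    exact hne (hsupp i j hj)
  · intro hj
    have : j = σ i := hj
    rw [this]
    exact hdiag i
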